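/- Let G be a pair of d-dimensional layer-permuted butterflies with left layer permutation π and right layer permutation σ; fix q ≤ d and m = d − q, with q ≥ 1. Suppose (two reused dimensions) σ(q) = π(j) = i for some 1 ≤ j ≤ m+1 and π(m+1) = σ(k) = l for some k ∈ {q, …, d}, with i ≠ l. Then for every connected component C of the q-dimensional sub-butterfly connectivity graph, the set of children of the vertices of C (each left vertex x* has children x0* and x1*, fixing bit π(m+1); each right vertex *y has children *0y and *1y, fixing bit σ(q)) splits into exactly four connected components of the (q−1)-dimensional sub-butterfly connectivity graph, determined by the four possible values of the pair of bits in positions i and l. -/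

import Mathlib

/-- A binary string of length `d`. -/
abbrev BStr (d : ℕ) := Fin d → Bool

/-- The string `b` lies in the left sub-butterfly `x*` of a pair of
`d`-dimensional layer-permuted butterflies with left layer permutation `π`
(written `0`-based): bit `π i` of `b` equals `x i` for all `i < m = d - q`. -/
def leftSubMem (d q : ℕ) (π : Equiv.Perm (Fin d))
    (x : Fin (d - q) → Bool) (b : BStr d) : Prop :=
  ∀ i : Fin (d - q), b (π (Fin.castLE (Nat.sub_le d q) i)) = x i

/-- The string `b` lies in the right sub-butterfly `*y` of a pair of
`d`-dimensional layer-permuted butterflies with right layer permutation `σ`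
(written `0`-based): bit `σ (q + j)` of `b` equals `y j` for all
`j < m = d - q`. -/
def rightSubMem (d q : ℕ) (hq : q ≤ d) (σ : Equiv.Perm (Fin d))
    (y : Fin (d - q) → Bool) (b : BStr d) : Prop :=
  ∀ j : Fin (d - q), b (σ (Fin.castLE (by omega) (Fin.natAdd q j))) = y j

/-- The left sub-butterfly `x*` and the right sub-butterfly `*y` share at least
one node on layer `d`. -/
def connRel (d q : ℕ) (hq : q ≤ d) (π σ : Equiv.Perm (Fin d))
    (x y : Fin (d - q) → Bool) : Prop :=
  ∃ b : BStr d, leftSubMem d q π x b ∧ rightSubMem d q hq σ y b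

/-- The `q`-dimensional sub-butterfly connectivity graph of a pair of
`d`-dimensional layer-permuted butterflies: a bipartite graph whose left
vertices (`Sum.inl`) are the `2^m` left sub-butterflies `x*` and whose right
vertices (`Sum.inr`) are the `2^m` right sub-butterflies `*y`, adjacent iff
the two sub-butterflies share a node on layer `d`. -/
def connGraph (d q : ℕ) (hq : q ≤ d) (π σ : Equiv.Perm (Fin d)) :
    SimpleGraph ((Fin (d - q) → Bool) ⊕ (Fin (d - q) → Bool)) where
  Adj u v :=
    (∃ x y, u = Sum.inl x ∧ v = Sum.inr y ∧ connRel d q hq π σ x y) ∨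
    (∃ x y, u = Sum.inr y ∧ v = Sum.inl x ∧ connRel d q hq π σ x y)
  symm := by
    constructor
    rintro u v (⟨x, y, rfl, rfl, h⟩ | ⟨x, y, rfl, rfl, h⟩)
    · exact Or.inr ⟨x, y, rfl, rfl, h⟩
    · exact Or.inl ⟨x, y, rfl, rfl, h⟩
  loopless := by
    constructor
    rintro u (⟨x, y, h1, h2, -⟩ | ⟨x, y, h1, h2, -⟩) <;> subst h1 <;> simp at h2

/-- The child `x0*` or `x1*` (according to `t`) of the left sub-butterfly `x*`:
the `(q-1)`-dimensional left sub-butterfly obtained by additionally fixing bit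
`π (m+1)` (`0`-based: `π m`, `m = d - q`) to the value `t`. -/
def childL (d q : ℕ) (x : Fin (d - q) → Bool) (t : Bool) :
    Fin (d - (q - 1)) → Bool :=
  fun i => if h : (i : ℕ) < d - q then x ⟨i, h⟩ else t

/-- The child `*0y` or `*1y` (according to `t`) of the right sub-butterfly
`*y`: the `(q-1)`-dimensional right sub-butterfly obtained by additionally
fixing bit `σ q` (`0`-based: `σ (q-1)`) to the value `t`. -/
def childR (d q : ℕ) (y : Fin (d - q) → Bool) (t : Bool) :
    Fin (d - (q - 1)) → Bool :=
  fun j => if h : 0 < (j : ℕ) then y ⟨(j : ℕ) - 1, by have := j.isLt; omega⟩ else t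

/-- The child (according to `t`) of a vertex of the `q`-dimensional
sub-butterfly connectivity graph, as a vertex of the `(q-1)`-dimensional one. -/
def childV (d q : ℕ) :
    ((Fin (d - q) → Bool) ⊕ (Fin (d - q) → Bool)) → Bool →
      ((Fin (d - (q - 1)) → Bool) ⊕ (Fin (d - (q - 1)) → Bool))
  | Sum.inl x, t => Sum.inl (childL d q x t)
  | Sum.inr y, t => Sum.inr (childR d q y t)

/-- The value of physical bit `i` on a left `(q-1)`-dimensional sub-butterfly
`x'` (entry `s` of `x'` fixes bit `π s`), when bit `i` is among the fixed
bits; junk value `false` otherwise. -/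
def bitValL (d q : ℕ) (π : Equiv.Perm (Fin d)) (i : Fin d)
    (x' : Fin (d - (q - 1)) → Bool) : Bool :=
  if h : ((π.symm i : Fin d) : ℕ) < d - (q - 1) then
    x' ⟨((π.symm i : Fin d) : ℕ), h⟩ else false

/-- The value of physical bit `i` on a right `(q-1)`-dimensional sub-butterfly
`y'` (entry `j` of `y'` fixes bit `σ ((q-1) + j)`), when bit `i` is among the
fixed bits; junk value `false` otherwise. -/
def bitValR (d q : ℕ) (σ : Equiv.Perm (Fin d)) (i : Fin d)
    (y' : Fin (d - (q - 1)) → Bool) : Bool :=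
  if h : q - 1 ≤ ((σ.symm i : Fin d) : ℕ) ∧
      ((σ.symm i : Fin d) : ℕ) - (q - 1) < d - (q - 1) then
    y' ⟨((σ.symm i : Fin d) : ℕ) - (q - 1), h.2⟩ else false

/-- The value of physical bit `i` on a vertex of the `(q-1)`-dimensional
sub-butterfly connectivity graph. -/
def bitVal (d q : ℕ) (π σ : Equiv.Perm (Fin d)) (i : Fin d) :
    ((Fin (d - (q - 1)) → Bool) ⊕ (Fin (d - (q - 1)) → Bool)) → Bool
  | Sum.inl x' => bitValL d q π i x'
  | Sum.inr y' => bitValR d q σ i y'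

section Aux

open SimpleGraph

/-- The value of physical bit `p` on a left sub-butterfly at level `r`. -/
def bitL (d r : ℕ) (π : Equiv.Perm (Fin d)) (p : Fin d) (x : Fin (d - r) → Bool) : Bool :=
  if h : ((π.symm p : Fin d) : ℕ) < d - r then x ⟨((π.symm p : Fin d) : ℕ), h⟩ else false

/-- The value of physical bit `p` on a right sub-butterfly at level `r`. -/
def bitR' (d r : ℕ) (σ : Equiv.Perm (Fin d)) (p : Fin d) (y : Fin (d - r) → Bool) : Bool :=
  if h : r ≤ ((σ.symm p : Fin d) : ℕ) ∧ ((σ.symm p : Fin d) : ℕ) - r < d - r then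
    y ⟨((σ.symm p : Fin d) : ℕ) - r, h.2⟩ else false

/-- The value of physical bit `p` on a vertex at level `r`. -/
def vbit (d r : ℕ) (π σ : Equiv.Perm (Fin d)) (p : Fin d) :
    ((Fin (d - r) → Bool) ⊕ (Fin (d - r) → Bool)) → Bool
  | Sum.inl x => bitL d r π p x
  | Sum.inr y => bitR' d r σ p y

/-- Bit `p` is fixed on both sides at level `r`. -/
def Shared (d r : ℕ) (π σ : Equiv.Perm (Fin d)) (p : Fin d) : Prop :=
  ((π.symm p : Fin d) : ℕ) < d - r ∧ r ≤ ((σ.symm p : Fin d) : ℕ)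

/-- A common node of two compatible sub-butterflies. -/
def glue (d r : ℕ) (π σ : Equiv.Perm (Fin d)) (x y : Fin (d - r) → Bool) : BStr d :=
  fun p => if h1 : ((π.symm p : Fin d) : ℕ) < d - r then x ⟨((π.symm p : Fin d) : ℕ), h1⟩
    else if h2 : r ≤ ((σ.symm p : Fin d) : ℕ) then
      y ⟨((σ.symm p : Fin d) : ℕ) - r, by have := (σ.symm p).isLt; omega⟩ else false

lemma connRel_iff (d r : ℕ) (hr : r ≤ d) (π σ : Equiv.Perm (Fin d))
    (x y : Fin (d - r) → Bool) :
    connRel d r hr π σ x y ↔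
      ∀ p : Fin d, Shared d r π σ p → bitL d r π p x = bitR' d r σ p y := by
  constructor
  · rintro ⟨b, hbl, hbr⟩ p ⟨h1, h2⟩
    have hps : ((σ.symm p : Fin d) : ℕ) < d := (σ.symm p).isLt
    have hsub : ((σ.symm p : Fin d) : ℕ) - r < d - r := by omega
    have e1 : bitL d r π p x = b p := by
      rw [bitL, dif_pos h1, ← hbl ⟨((π.symm p : Fin d) : ℕ), h1⟩]
      congr 1
      have : (Fin.castLE (Nat.sub_le d r) ⟨((π.symm p : Fin d) : ℕ), h1⟩ : Fin d) = π.symm p :=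
        Fin.ext rfl
      rw [this, Equiv.apply_symm_apply]
    have e2 : bitR' d r σ p y = b p := by
      rw [bitR', dif_pos ⟨h2, hsub⟩, ← hbr ⟨((σ.symm p : Fin d) : ℕ) - r, hsub⟩]
      congr 1
      have : (Fin.castLE (by omega : r + (d - r) ≤ d)
          (Fin.natAdd r ⟨((σ.symm p : Fin d) : ℕ) - r, hsub⟩) : Fin d) = σ.symm p :=
        Fin.ext (by simp [Fin.natAdd]; omega)
      rw [this, Equiv.apply_symm_apply]
    rw [e1, e2]
  · intro h
    refine ⟨glue d r π σ x y, ?_, ?_⟩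
    · intro c
      have hsym : π.symm (π (Fin.castLE (Nat.sub_le d r) c)) = Fin.castLE (Nat.sub_le d r) c :=
        Equiv.symm_apply_apply _ _
      have hc : ((Fin.castLE (Nat.sub_le d r) c : Fin d) : ℕ) < d - r := c.isLt
      rw [glue, hsym, dif_pos hc]
      exact congrArg x (Fin.ext rfl)
    · intro c
      set p := σ (Fin.castLE (by omega : r + (d - r) ≤ d) (Fin.natAdd r c)) with hp
      have hsp : σ.symm p = Fin.castLE (by omega) (Fin.natAdd r c) := by
        rw [hp, Equiv.symm_apply_apply]
      have hspv : ((σ.symm p : Fin d) : ℕ) = r + (c : ℕ) := by rw [hsp]; rfl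
      show glue d r π σ x y p = y c
      by_cases h1 : ((π.symm p : Fin d) : ℕ) < d - r
      · have hsh : Shared d r π σ p := ⟨h1, by omega⟩
        have hh := h p hsh
        rw [bitL, dif_pos h1, bitR',
          dif_pos (show r ≤ ((σ.symm p : Fin d) : ℕ) ∧
            ((σ.symm p : Fin d) : ℕ) - r < d - r from ⟨by omega, by have := c.isLt; omega⟩)] at hh
        rw [glue, dif_pos h1, hh]
        congr 1
        exact Fin.ext (by simp [hspv])
      · rw [glue, dif_neg h1, dif_pos (show r ≤ ((σ.symm p : Fin d) : ℕ) by omega)]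
        congr 1
        exact Fin.ext (by simp [hspv])

end Aux
section Aux2

open SimpleGraph

lemma vbit_eq_of_adj {d r : ℕ} {hr : r ≤ d} {π σ : Equiv.Perm (Fin d)} {u v}
    (h : (connGraph d r hr π σ).Adj u v) (p : Fin d) (hp : Shared d r π σ p) :
    vbit d r π σ p u = vbit d r π σ p v := by
  rcases h with ⟨x, y, rfl, rfl, hc⟩ | ⟨x, y, rfl, rfl, hc⟩
  · exact (connRel_iff d r hr π σ x y).1 hc p hp
  · exact ((connRel_iff d r hr π σ x y).1 hc p hp).symm

lemma vbit_eq_of_reachable {d r : ℕ} {hr : r ≤ d} {π σ : Equiv.Perm (Fin d)} {u v}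
    (h : (connGraph d r hr π σ).Reachable u v) (p : Fin d) (hp : Shared d r π σ p) :
    vbit d r π σ p u = vbit d r π σ p v := by
  obtain ⟨w⟩ := h
  induction w with
  | nil => rfl
  | cons ha _ ih => exact (vbit_eq_of_adj ha p hp).trans ih

/-- The canonical right mate of a left sub-butterfly. -/
def mateR (d r : ℕ) (hr : r ≤ d) (π σ : Equiv.Perm (Fin d)) (x : Fin (d - r) → Bool) :
    Fin (d - r) → Bool :=
  fun c => bitL d r π (σ (Fin.castLE (by omega : r + (d - r) ≤ d) (Fin.natAdd r c))) x

/-- The canonical left mate of a right sub-butterfly. -/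
def mateL (d r : ℕ) (hr : r ≤ d) (π σ : Equiv.Perm (Fin d)) (y : Fin (d - r) → Bool) :
    Fin (d - r) → Bool :=
  fun c => bitR' d r σ (π (Fin.castLE (Nat.sub_le d r) c)) y

lemma bitR'_mateR {d r : ℕ} (hr : r ≤ d) (π σ : Equiv.Perm (Fin d))
    (x : Fin (d - r) → Bool) (p : Fin d) (hp : r ≤ ((σ.symm p : Fin d) : ℕ)) :
    bitR' d r σ p (mateR d r hr π σ x) = bitL d r π p x := by
  have hps : ((σ.symm p : Fin d) : ℕ) < d := (σ.symm p).isLt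
  rw [bitR', dif_pos ⟨hp, by omega⟩, mateR]
  have : (σ (Fin.castLE (by omega : r + (d - r) ≤ d)
      (Fin.natAdd r ⟨((σ.symm p : Fin d) : ℕ) - r, by omega⟩))) = p := by
    have : (Fin.castLE (by omega : r + (d - r) ≤ d)
        (Fin.natAdd r ⟨((σ.symm p : Fin d) : ℕ) - r, by omega⟩) : Fin d) = σ.symm p :=
      Fin.ext (by simp [Fin.natAdd]; omega)
    rw [this, Equiv.apply_symm_apply]
  rw [this]

lemma bitL_mateL {d r : ℕ} (hr : r ≤ d) (π σ : Equiv.Perm (Fin d))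
    (y : Fin (d - r) → Bool) (p : Fin d) (hp : ((π.symm p : Fin d) : ℕ) < d - r) :
    bitL d r π p (mateL d r hr π σ y) = bitR' d r σ p y := by
  rw [bitL, dif_pos hp, mateL]
  have : (π (Fin.castLE (Nat.sub_le d r) ⟨((π.symm p : Fin d) : ℕ), hp⟩)) = p := by
    have : (Fin.castLE (Nat.sub_le d r) ⟨((π.symm p : Fin d) : ℕ), hp⟩ : Fin d) = π.symm p :=
      Fin.ext rfl
    rw [this, Equiv.apply_symm_apply]
  rw [this]

lemma adj_inl_inr {d r : ℕ} (hr : r ≤ d) (π σ : Equiv.Perm (Fin d))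
    (x y : Fin (d - r) → Bool)
    (h : ∀ p, Shared d r π σ p → bitL d r π p x = bitR' d r σ p y) :
    (connGraph d r hr π σ).Adj (Sum.inl x) (Sum.inr y) :=
  Or.inl ⟨x, y, rfl, rfl, (connRel_iff d r hr π σ x y).2 h⟩

lemma reachable_iff {d r : ℕ} (hr : r ≤ d) (π σ : Equiv.Perm (Fin d)) (u v) :
    (connGraph d r hr π σ).Reachable u v ↔
      ∀ p, Shared d r π σ p → vbit d r π σ p u = vbit d r π σ p v := by
  constructor
  · exact fun h p hp => vbit_eq_of_reachable h p hp
  · intro h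
    match u, v with
    | Sum.inl x, Sum.inl x' =>
      have h1 : (connGraph d r hr π σ).Adj (Sum.inl x) (Sum.inr (mateR d r hr π σ x)) :=
        adj_inl_inr hr π σ _ _ (fun p hp => (bitR'_mateR hr π σ x p hp.2).symm)
      have h2 : (connGraph d r hr π σ).Adj (Sum.inl x') (Sum.inr (mateR d r hr π σ x)) :=
        adj_inl_inr hr π σ _ _ (fun p hp =>
          ((h p hp).symm.trans (bitR'_mateR hr π σ x p hp.2).symm))
      exact h1.reachable.trans h2.reachable.symm
    | Sum.inl x, Sum.inr y =>
      exact (adj_inl_inr hr π σ x y (fun p hp => h p hp)).reachable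
    | Sum.inr y, Sum.inl x =>
      exact (adj_inl_inr hr π σ x y (fun p hp => (h p hp).symm)).reachable.symm
    | Sum.inr y, Sum.inr y' =>
      have h1 : (connGraph d r hr π σ).Adj (Sum.inl (mateL d r hr π σ y)) (Sum.inr y) :=
        adj_inl_inr hr π σ _ _ (fun p hp => bitL_mateL hr π σ y p hp.1)
      have h2 : (connGraph d r hr π σ).Adj (Sum.inl (mateL d r hr π σ y)) (Sum.inr y') :=
        adj_inl_inr hr π σ _ _ (fun p hp => (bitL_mateL hr π σ y p hp.1).trans (h p hp))
      exact h1.reachable.symm.trans h2.reachable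

end Aux2
section Aux3

open SimpleGraph

lemma bitL_childL {d q : ℕ} (π : Equiv.Perm (Fin d)) (p : Fin d)
    (x : Fin (d - q) → Bool) (t : Bool) (h : ((π.symm p : Fin d) : ℕ) < d - q) :
    bitL d (q - 1) π p (childL d q x t) = bitL d q π p x := by
  have h' : ((π.symm p : Fin d) : ℕ) < d - (q - 1) := by omega
  rw [bitL, dif_pos h', bitL, dif_pos h, childL, dif_pos h]

lemma bitL_childL_top {d q : ℕ} (hq1 : 1 ≤ q) (hqd : q ≤ d) (π : Equiv.Perm (Fin d))
    (p : Fin d) (x : Fin (d - q) → Bool) (t : Bool) (h : ((π.symm p : Fin d) : ℕ) = d - q) :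
    bitL d (q - 1) π p (childL d q x t) = t := by
  have h' : ((π.symm p : Fin d) : ℕ) < d - (q - 1) := by omega
  rw [bitL, dif_pos h', childL,
    dif_neg (by omega : ¬ ((π.symm p : Fin d) : ℕ) < d - q)]

lemma bitR'_childR {d q : ℕ} (hq1 : 1 ≤ q) (σ : Equiv.Perm (Fin d)) (p : Fin d)
    (y : Fin (d - q) → Bool) (t : Bool) (h : q ≤ ((σ.symm p : Fin d) : ℕ)) :
    bitR' d (q - 1) σ p (childR d q y t) = bitR' d q σ p y := by
  have hps : ((σ.symm p : Fin d) : ℕ) < d := (σ.symm p).isLt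
  rw [bitR', dif_pos ⟨by omega, by omega⟩, bitR', dif_pos ⟨h, by omega⟩, childR,
    dif_pos (by omega : 0 < ((σ.symm p : Fin d) : ℕ) - (q - 1))]
  exact congrArg y (Fin.ext (show ((σ.symm p : Fin d) : ℕ) - (q - 1) - 1 =
    ((σ.symm p : Fin d) : ℕ) - q by omega))

lemma bitR'_childR_bot {d q : ℕ} (hq1 : 1 ≤ q) (hqd : q ≤ d) (σ : Equiv.Perm (Fin d))
    (p : Fin d) (y : Fin (d - q) → Bool) (t : Bool) (h : ((σ.symm p : Fin d) : ℕ) = q - 1) :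
    bitR' d (q - 1) σ p (childR d q y t) = t := by
  rw [bitR', dif_pos ⟨by omega, by omega⟩, childR,
    dif_neg (by omega : ¬ 0 < ((σ.symm p : Fin d) : ℕ) - (q - 1))]

lemma vbit_childV {d q : ℕ} (hq1 : 1 ≤ q) (π σ : Equiv.Perm (Fin d)) (p : Fin d)
    (u : (Fin (d - q) → Bool) ⊕ (Fin (d - q) → Bool)) (t : Bool)
    (hp : Shared d q π σ p) :
    vbit d (q - 1) π σ p (childV d q u t) = vbit d q π σ p u := by
  cases u with
  | inl x => exact bitL_childL π p x t hp.1
  | inr y => exact bitR'_childR hq1 σ p y t hp.2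

lemma bitVal_eq_vbit {d q : ℕ} (π σ : Equiv.Perm (Fin d)) (p : Fin d) (w) :
    bitVal d q π σ p w = vbit d (q - 1) π σ p w := by
  cases w <;> rfl

lemma exists_parent {d q : ℕ} (hq1 : 1 ≤ q) (hqd : q ≤ d)
    (w : (Fin (d - (q - 1)) → Bool) ⊕ (Fin (d - (q - 1)) → Bool)) :
    ∃ u t, w = childV d q u t := by
  cases w with
  | inl x' =>
    refine ⟨Sum.inl (fun c => x' ⟨(c : ℕ), by have := c.isLt; omega⟩),
      x' ⟨d - q, by omega⟩, ?_⟩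
    show Sum.inl x' = Sum.inl (childL d q _ _)
    congr 1
    funext c
    rw [childL]
    by_cases hc : (c : ℕ) < d - q
    · rw [dif_pos hc]
    · rw [dif_neg hc]
      exact congrArg x' (Fin.ext (show (c : ℕ) = d - q by have := c.isLt; omega))
  | inr y' =>
    refine ⟨Sum.inr (fun c => y' ⟨(c : ℕ) + 1, by have := c.isLt; omega⟩),
      y' ⟨0, by omega⟩, ?_⟩
    show Sum.inr y' = Sum.inr (childR d q _ _)
    congr 1
    funext c
    rw [childR]
    by_cases hc : 0 < (c : ℕ)
    · rw [dif_pos hc]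
      exact congrArg y' (Fin.ext (show (c : ℕ) = (c : ℕ) - 1 + 1 by omega))
    · rw [dif_neg hc]
      exact congrArg y' (Fin.ext (show (c : ℕ) = 0 by omega))

end Aux3
lemma exists_left_rep {d q : ℕ} (hqd : q ≤ d) (π σ : Equiv.Perm (Fin d))
    (u₀ : (Fin (d - q) → Bool) ⊕ (Fin (d - q) → Bool)) :
    ∃ x₀, (connGraph d q hqd π σ).Reachable (Sum.inl x₀) u₀ := by
  cases u₀ with
  | inl x => exact ⟨x, SimpleGraph.Reachable.refl _⟩
  | inr y =>
    exact ⟨mateL d q hqd π σ y,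
      (adj_inl_inr hqd π σ _ y (fun p hp => bitL_mateL hqd π σ y p hp.1)).reachable⟩

/-- Canonical representative child. -/
def repX (d q : ℕ) (x₀ : Fin (d - q) → Bool) (jF : Fin (d - q)) (s : Bool × Bool) :
    Fin (d - (q - 1)) → Bool :=
  childL d q (Function.update x₀ jF s.1) s.2
/-- two reused dimensions: suppose `σ q = π j = i` for some
`j ≤ m+1`, and `π (m+1) = σ k = l` for some `k ∈ {q, …, d}`, with `i ≠ l`
(stated `1`-based in the paper; `0`-based here).  Then for every connected
component `C` of the `q`-dimensional sub-butterfly connectivity graph, the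
children of the vertices of `C` split into exactly four connected components
of the `(q-1)`-dimensional connectivity graph, determined by the four possible
values of the pair of bits in positions `i` and `l`. -/
theorem connectivity_graph_component_two_reused_dimensions
    (d q : ℕ) (hq1 : 1 ≤ q) (hqd : q ≤ d) (π σ : Equiv.Perm (Fin d))
    (i l : Fin d) (hil : i ≠ l)
    (hi : σ ⟨q - 1, by omega⟩ = i ∧ ∃ j : Fin d, (j : ℕ) ≤ d - q ∧ π j = i)
    (hl : π ⟨d - q, by omega⟩ = l ∧ ∃ k : Fin d, q - 1 ≤ (k : ℕ) ∧ σ k = l) :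
    ∀ C : (connGraph d q hqd π σ).ConnectedComponent,
      ∃ f : Bool × Bool → (connGraph d (q - 1) (by omega) π σ).ConnectedComponent,
        Function.Injective f ∧
        (∀ w, (∃ u ∈ C.supp, ∃ t : Bool, w = childV d q u t) ↔
          ∃ s : Bool × Bool, w ∈ (f s).supp) ∧
        (∀ w, (∃ u ∈ C.supp, ∃ t : Bool, w = childV d q u t) →
          ∀ s : Bool × Bool, (w ∈ (f s).supp ↔
            bitVal d q π σ i w = s.1 ∧ bitVal d q π σ l w = s.2)) := by
  have hq' : q - 1 ≤ d := by omega
  obtain ⟨hσi, j, hjle, hπj⟩ := hi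
  obtain ⟨hπl, k, hkle, hσk⟩ := hl
  have hσsymm_i : σ.symm i = ⟨q - 1, by omega⟩ := σ.symm_apply_eq.mpr hσi.symm
  have hπsymm_i : π.symm i = j := π.symm_apply_eq.mpr hπj.symm
  have hπsymm_l : π.symm l = ⟨d - q, by omega⟩ := π.symm_apply_eq.mpr hπl.symm
  have hσsymm_l : σ.symm l = k := σ.symm_apply_eq.mpr hσk.symm
  have hjlt : (j : ℕ) < d - q := by
    have hne : (j : ℕ) ≠ d - q := by
      intro he
      exact hil (by rw [← hπj, ← hπl]; exact congrArg π (Fin.ext he))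
    omega
  have hkge : q ≤ (k : ℕ) := by
    have hne : (k : ℕ) ≠ q - 1 := by
      intro he
      exact hil (by rw [← hσi, ← hσk]; exact (congrArg σ (Fin.ext he)).symm)
    omega
  -- shared facts
  have hSi : Shared d (q - 1) π σ i := by
    constructor
    · rw [hπsymm_i]; omega
    · rw [hσsymm_i]
  have hSl : Shared d (q - 1) π σ l := by
    constructor
    · rw [hπsymm_l]; show d - q < d - (q - 1); omega
    · rw [hσsymm_l]; omega
  have hNi : ¬ Shared d q π σ i := by
    rintro ⟨-, h2⟩
    rw [hσsymm_i] at h2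
    simp only [] at h2
    omega
  have hmono : ∀ p, Shared d q π σ p → Shared d (q - 1) π σ p := by
    rintro p ⟨a, b⟩; exact ⟨by omega, by omega⟩
  have htrich : ∀ p, Shared d (q - 1) π σ p → p ≠ i → p ≠ l → Shared d q π σ p := by
    rintro p ⟨a, b⟩ hpi hpl
    constructor
    · have : ((π.symm p : Fin d) : ℕ) ≠ d - q := by
        intro he
        have h' : π.symm p = π.symm l := by rw [hπsymm_l]; exact Fin.ext he
        exact hpl (π.symm.injective h')
      omega
    · have : ((σ.symm p : Fin d) : ℕ) ≠ q - 1 := by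
        intro he
        have h' : σ.symm p = σ.symm i := by rw [hσsymm_i]; exact Fin.ext he
        exact hpi (σ.symm.injective h')
      omega
  intro C
  induction C using SimpleGraph.ConnectedComponent.ind with
  | _ u₀ =>
  -- a left representative of C
  have hx := exists_left_rep hqd π σ u₀
  obtain ⟨x₀, hx₀⟩ := hx
  have hbitLi : ∀ x : Fin (d - q) → Bool, bitL d q π i x = x ⟨(j : ℕ), hjlt⟩ := by
    intro x
    have hc : ((π.symm i : Fin d) : ℕ) < d - q := by rw [hπsymm_i]; exact hjlt
    rw [bitL, dif_pos hc]
    exact congrArg x (Fin.ext (show ((π.symm i : Fin d) : ℕ) = (j : ℕ) by rw [hπsymm_i]))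
  -- bit values of the representative
  have hrep_i : ∀ s : Bool × Bool,
      vbit d (q - 1) π σ i (Sum.inl (repX d q x₀ ⟨(j : ℕ), hjlt⟩ s)) = s.1 := by
    intro s
    show bitL d (q - 1) π i (childL d q (Function.update x₀ ⟨(j : ℕ), hjlt⟩ s.1) s.2) = s.1
    rw [bitL_childL π i _ _ (by rw [hπsymm_i]; exact hjlt), hbitLi]
    exact Function.update_self _ s.1 x₀
  have hrep_l : ∀ s : Bool × Bool,
      vbit d (q - 1) π σ l (Sum.inl (repX d q x₀ ⟨(j : ℕ), hjlt⟩ s)) = s.2 := by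
    intro s
    exact bitL_childL_top hq1 hqd π l _ _ (by rw [hπsymm_l])
  have hrep_Sq : ∀ (s : Bool × Bool) (p : Fin d), Shared d q π σ p →
      vbit d (q - 1) π σ p (Sum.inl (repX d q x₀ ⟨(j : ℕ), hjlt⟩ s)) = vbit d q π σ p u₀ := by
    intro s p hp
    show bitL d (q - 1) π p (childL d q (Function.update x₀ ⟨(j : ℕ), hjlt⟩ s.1) s.2) = _
    rw [bitL_childL π p _ _ hp.1]
    have hne : (⟨((π.symm p : Fin d) : ℕ), hp.1⟩ : Fin (d - q)) ≠ ⟨(j : ℕ), hjlt⟩ := by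
      intro he
      apply hNi
      have h' : π.symm p = π.symm i := by
        rw [hπsymm_i]
        exact Fin.ext (by rw [← congrArg Fin.val he])
      exact π.symm.injective h' ▸ hp
    rw [bitL, dif_pos hp.1, Function.update_of_ne hne]
    rw [show x₀ ⟨((π.symm p : Fin d) : ℕ), hp.1⟩ = bitL d q π p x₀ by
      rw [bitL, dif_pos hp.1]]
    rw [show bitL d q π p x₀ = vbit d q π σ p (Sum.inl x₀) from rfl]
    exact vbit_eq_of_reachable hx₀ p hp
  -- the four components
  have hmem : ∀ (s : Bool × Bool) w,
      w ∈ ((connGraph d (q - 1) hq' π σ).connectedComponentMk (Sum.inl (repX d q x₀ ⟨(j : ℕ), hjlt⟩ s))).supp ↔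
      (vbit d (q - 1) π σ i w = s.1 ∧ vbit d (q - 1) π σ l w = s.2 ∧
        ∀ p, Shared d q π σ p → vbit d (q - 1) π σ p w = vbit d q π σ p u₀) := by
    intro s w
    rw [SimpleGraph.ConnectedComponent.mem_supp_iff, SimpleGraph.ConnectedComponent.eq,
      reachable_iff hq' π σ]
    constructor
    · intro h
      refine ⟨(h i hSi).trans (hrep_i s), (h l hSl).trans (hrep_l s),
        fun p hp => (h p (hmono p hp)).trans (hrep_Sq s p hp)⟩
    · rintro ⟨h1, h2, h3⟩ p hp
      by_cases hpi : p = i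
      · subst hpi; rw [h1, hrep_i]
      by_cases hpl : p = l
      · subst hpl; rw [h2, hrep_l]
      have hpq := htrich p hp hpi hpl
      rw [h3 p hpq, hrep_Sq s p hpq]
  have hchild : ∀ u t, u ∈ ((connGraph d q hqd π σ).connectedComponentMk u₀).supp →
      ∀ s : Bool × Bool,
      (childV d q u t ∈
          ((connGraph d (q - 1) hq' π σ).connectedComponentMk (Sum.inl (repX d q x₀ ⟨(j : ℕ), hjlt⟩ s))).supp ↔
        bitVal d q π σ i (childV d q u t) = s.1 ∧
        bitVal d q π σ l (childV d q u t) = s.2) := by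
    intro u t hu s
    rw [bitVal_eq_vbit π σ i (childV d q u t), bitVal_eq_vbit π σ l (childV d q u t), hmem]
    have hr : (connGraph d q hqd π σ).Reachable u u₀ :=
      SimpleGraph.ConnectedComponent.exact
        ((SimpleGraph.ConnectedComponent.mem_supp_iff _ _).1 hu)
    have h3 : ∀ p, Shared d q π σ p →
        vbit d (q - 1) π σ p (childV d q u t) = vbit d q π σ p u₀ := fun p hp =>
      (vbit_childV hq1 π σ p u t hp).trans (vbit_eq_of_reachable hr p hp)
    tauto
  refine ⟨fun s => (connGraph d (q - 1) hq' π σ).connectedComponentMk (Sum.inl (repX d q x₀ ⟨(j : ℕ), hjlt⟩ s)),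
    ?_, ?_, ?_⟩
  · -- injectivity
    intro s s' hss'
    have h1 : Sum.inl (repX d q x₀ ⟨(j : ℕ), hjlt⟩ s) ∈
        ((connGraph d (q - 1) hq' π σ).connectedComponentMk (Sum.inl (repX d q x₀ ⟨(j : ℕ), hjlt⟩ s'))).supp := by
      rw [SimpleGraph.ConnectedComponent.mem_supp_iff]
      exact hss'
    rw [hmem] at h1
    exact Prod.ext ((hrep_i s).symm.trans h1.1) ((hrep_l s).symm.trans h1.2.1)
  · -- second bullet
    intro w
    constructor
    · rintro ⟨u, hu, t, rfl⟩
      exact ⟨(bitVal d q π σ i (childV d q u t), bitVal d q π σ l (childV d q u t)),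
        (hchild u t hu _).2 ⟨rfl, rfl⟩⟩
    · rintro ⟨s, hs⟩
      obtain ⟨u, t, rfl⟩ := exists_parent hq1 hqd w
      refine ⟨u, ?_, t, rfl⟩
      rw [hmem] at hs
      rw [SimpleGraph.ConnectedComponent.mem_supp_iff, SimpleGraph.ConnectedComponent.eq,
        reachable_iff hqd π σ]
      intro p hp
      rw [← vbit_childV hq1 π σ p u t hp, hs.2.2 p hp]
  · -- third bullet
    intro w hw s
    obtain ⟨u, hu, t, hw'⟩ := hw
    subst hw'
    exact hchild u t hu s
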